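/- For every λ in the open interval (0,1), the equation F(x) = λ has a unique real solution x. -/

import Mathlib

open Real Filter MeasureTheory

noncomputable def F : ℝ → ℝ := fun x =>
  if x = 0 then 1/2 else Real.exp x / (Real.exp x - 1) - 1/x

lemma F_ne (x : ℝ) (hx : x ≠ 0) : F x = Real.exp x / (Real.exp x - 1) - 1/x := by
  simp [F, hx]

lemma F_zero : F 0 = 1/2 := by simp [F]

lemma exp_sub_one_ne (x : ℝ) (hx : x ≠ 0) : Real.exp x - 1 ≠ 0 := by
  simpa [sub_eq_zero, Real.exp_eq_one_iff] using hx

lemma exp_sub_one_pos {x : ℝ} (hx : 0 < x) : 0 < Real.exp x - 1 := by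
  have := Real.add_one_lt_exp (ne_of_gt hx)
  linarith

lemma key_pos {x : ℝ} (hx : 0 < x) : x^2 * Real.exp x < (Real.exp x - 1)^2 := by
  have h : x / 2 < Real.sinh (x/2) := Real.self_lt_sinh_iff.mpr (by positivity)
  rw [Real.sinh_eq, Real.exp_neg] at h
  set s := Real.exp (x/2) with hs_def
  have hs : 0 < s := Real.exp_pos _
  have hE : Real.exp x = s^2 := by
    rw [hs_def, sq, ← Real.exp_add]; ring_nf
  have hxs : x * s < s^2 - 1 := by
    have h1 : x < s - s⁻¹ := by linarith
    have h2 := mul_lt_mul_of_pos_right h1 hs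
    have : s⁻¹ * s = 1 := inv_mul_cancel₀ (ne_of_gt hs)
    nlinarith
  have hxspos : 0 < x * s := mul_pos hx hs
  rw [hE]
  nlinarith [hxs, hxspos]

lemma key {x : ℝ} (hx : x ≠ 0) : x^2 * Real.exp x < (Real.exp x - 1)^2 := by
  rcases hx.lt_or_gt with h | h
  · have hk := key_pos (neg_pos.mpr h)
    rw [Real.exp_neg] at hk
    have hp : 0 < Real.exp x := Real.exp_pos x
    have h2 := mul_lt_mul_of_pos_right hk (by positivity : (0:ℝ) < (Real.exp x)^2)
    have hinv : (Real.exp x)⁻¹ * Real.exp x = 1 := inv_mul_cancel₀ (ne_of_gt hp)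
    nlinarith [h2, hinv]
  · exact key_pos h

lemma F_hasDerivAt {x : ℝ} (hx : x ≠ 0) :
    HasDerivAt F (1/x^2 - Real.exp x / (Real.exp x - 1)^2) x := by
  have hE := exp_sub_one_ne x hx
  have h1 : HasDerivAt (fun y => Real.exp y / (Real.exp y - 1))
      ((Real.exp x * (Real.exp x - 1) - Real.exp x * Real.exp x) / (Real.exp x - 1)^2) x :=
    (Real.hasDerivAt_exp x).div ((Real.hasDerivAt_exp x).sub_const 1) hE
  have h2 : HasDerivAt (fun y : ℝ => 1/y) (-(x^2)⁻¹) x := by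
    simpa [one_div] using hasDerivAt_inv hx
  have h3 := h1.sub h2
  have heq : F =ᶠ[nhds x] fun y => Real.exp y / (Real.exp y - 1) - 1/y := by
    filter_upwards [eventually_ne_nhds hx] with y hy
    exact F_ne y hy
  have h4 := h3.congr_of_eventuallyEq heq
  refine h4.congr_deriv ?_
  field_simp
  ring

lemma F_deriv_pos {x : ℝ} (hx : x ≠ 0) : 0 < deriv F x := by
  rw [(F_hasDerivAt hx).deriv]
  have hk := key hx
  have h1 : (0:ℝ) < x^2 := by positivity
  have h2 : (0:ℝ) < (Real.exp x - 1)^2 := by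
    have := exp_sub_one_ne x hx; positivity
  rw [sub_pos, div_lt_div_iff₀ h2 h1]
  nlinarith [hk]

lemma F_mono_pos : StrictMonoOn F (Set.Ioi 0) := by
  apply strictMonoOn_of_deriv_pos (convex_Ioi 0)
  · intro x hx
    exact (F_hasDerivAt (ne_of_gt (Set.mem_Ioi.mp hx))).continuousAt.continuousWithinAt
  · intro x hx
    rw [interior_Ioi] at hx
    exact F_deriv_pos (ne_of_gt hx)

lemma F_neg_eq (x : ℝ) : F (-x) = 1 - F x := by
  rcases eq_or_ne x 0 with rfl | hx
  · norm_num [F]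
  · have hE := exp_sub_one_ne x hx
    have hp : Real.exp x ≠ 0 := (Real.exp_pos x).ne'
    rw [F_ne x hx, F_ne (-x) (neg_ne_zero.mpr hx), Real.exp_neg]
    have hE' : (Real.exp x)⁻¹ - 1 ≠ 0 := by
      rw [← Real.exp_neg]
      exact exp_sub_one_ne (-x) (neg_ne_zero.mpr hx)
    have h1 : 1 - Real.exp x ≠ 0 := fun h => hE (by linarith)
    field_simp [hx, hE, h1]
    ring

lemma h_pos {x : ℝ} (hx : 0 < x) : 0 < (x - 2) * Real.exp x + x + 2 := by
  set g : ℝ → ℝ := fun y => (y - 2) * Real.exp y + y + 2 with hg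
  have hderiv : ∀ y : ℝ, HasDerivAt g ((y - 1) * Real.exp y + 1) y := by
    intro y
    have h1 := ((hasDerivAt_id y).sub_const 2).mul (Real.hasDerivAt_exp y)
    have h2 := (h1.add (hasDerivAt_id y)).add_const 2
    refine h2.congr_deriv ?_
    simp only [id_eq]
    ring
  have hmono : StrictMonoOn g (Set.Ici 0) := by
    apply strictMonoOn_of_deriv_pos (convex_Ici 0)
    · intro y _; exact (hderiv y).continuousAt.continuousWithinAt
    · intro y hy
      rw [interior_Ici] at hy
      rw [(hderiv y).deriv]
      have hy0 : (0:ℝ) < y := hy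
      have h3 : 1 - y < Real.exp (-y) := by
        have := Real.add_one_lt_exp (neg_ne_zero.mpr (ne_of_gt hy0))
        linarith
      have h4 := mul_lt_mul_of_pos_right h3 (Real.exp_pos y)
      rw [← Real.exp_add] at h4
      simp at h4
      nlinarith
  have h0 : g 0 = 0 := by simp [hg]
  have := hmono (Set.self_mem_Ici) (Set.mem_Ici.mpr hx.le) hx
  rw [h0] at this
  simpa [hg] using this

lemma F_gt_half {x : ℝ} (hx : 0 < x) : 1/2 < F x := by
  rw [F_ne x (ne_of_gt hx)]
  have hE := exp_sub_one_pos hx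
  rw [div_sub_div _ _ (ne_of_gt hE) (ne_of_gt hx), lt_div_iff₀ (by positivity)]
  nlinarith [h_pos hx]

lemma F_lt_half {x : ℝ} (hx : x < 0) : F x < 1/2 := by
  have := F_gt_half (neg_pos.mpr hx)
  rw [F_neg_eq] at this
  linarith

lemma F_strictMono : StrictMono F := by
  intro x y hxy
  rcases lt_trichotomy x 0 with hx | rfl | hx
  · rcases lt_trichotomy y 0 with hy | rfl | hy
    · have h := F_mono_pos (Set.mem_Ioi.mpr (neg_pos.mpr hy))
        (Set.mem_Ioi.mpr (neg_pos.mpr hx)) (by linarith)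
      rw [F_neg_eq, F_neg_eq] at h
      linarith
    · rw [F_zero]; exact F_lt_half hx
    · linarith [F_lt_half hx, F_gt_half hy]
  · rw [F_zero]; exact F_gt_half hxy
  · exact F_mono_pos (Set.mem_Ioi.mpr hx) (Set.mem_Ioi.mpr (lt_trans hx hxy)) hxy

lemma F_le_bound {x : ℝ} (hx : 0 < x) (hx2 : x ≤ 2) : F x ≤ 1/2 + x/4 := by
  rw [F_ne x (ne_of_gt hx)]
  have hE := exp_sub_one_pos hx
  have hq : 1 + x + x^2/2 ≤ Real.exp x := by
    have := Real.quadratic_le_exp_of_nonneg hx.le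
    linarith
  have hxe : x + 1 ≤ Real.exp x := Real.add_one_le_exp x
  rw [div_sub_div _ _ (ne_of_gt hE) (ne_of_gt hx), div_le_iff₀ (by positivity)]
  nlinarith [mul_nonneg (by linarith : (0:ℝ) ≤ 2 - x)
      (by linarith : (0:ℝ) ≤ Real.exp x - (1 + x + x^2/2)),
    mul_nonneg (mul_nonneg hx.le hx.le) (by linarith : (0:ℝ) ≤ Real.exp x - 1 - x)]

lemma F_lower_bound {b : ℝ} (hb : 0 < b) : 1 - 1/b < F b := by
  rw [F_ne b (ne_of_gt hb)]
  have hE := exp_sub_one_pos hb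
  have h1 : 1 < Real.exp b / (Real.exp b - 1) := by
    rw [lt_div_iff₀ hE]; linarith
  linarith

lemma exists_sol {l : ℝ} (hl : 1/2 < l) (hl2 : l < 1) : ∃ x : ℝ, F x = l := by
  set a := min 1 (2*(l - 1/2)) with ha_def
  have ha0 : 0 < a := lt_min one_pos (by linarith)
  have ha2 : a ≤ 2 := le_trans (min_le_left _ _) one_le_two
  have hFa : F a < l := by
    have h1 := F_le_bound ha0 ha2
    have h2 : a ≤ 2*(l - 1/2) := min_le_right _ _
    linarith
  set b := max a (1/(1-l)) with hb_def
  have hab : a ≤ b := le_max_left _ _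
  have hb0 : 0 < b := lt_of_lt_of_le ha0 hab
  have hFb : l ≤ F b := by
    have h1 : 1/(1-l) ≤ b := le_max_right _ _
    have hll : 0 < 1 - l := by linarith
    have h2 : 1/b ≤ 1 - l := by
      rw [div_le_iff₀ hb0]
      rw [div_le_iff₀ hll] at h1
      linarith
    have := F_lower_bound hb0
    linarith
  have hc : ContinuousOn F (Set.Icc a b) := by
    intro x hx
    exact (F_hasDerivAt (ne_of_gt (lt_of_lt_of_le ha0 hx.1))).continuousAt.continuousWithinAt
  obtain ⟨x, _, hFx⟩ := intermediate_value_Icc hab hc ⟨hFa.le, hFb⟩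
  exact ⟨x, hFx⟩

theorem F_exists_unique_solution :
    ∀ l ∈ Set.Ioo (0:ℝ) 1, ∃! x : ℝ, F x = l := by
  intro l hl
  obtain ⟨hl0, hl1⟩ := hl
  have hex : ∃ x : ℝ, F x = l := by
    rcases lt_trichotomy l (1/2) with h | h | h
    · obtain ⟨x, hFx⟩ := exists_sol (l := 1 - l) (by linarith) (by linarith)
      exact ⟨-x, by rw [F_neg_eq]; linarith⟩
    · exact ⟨0, by rw [F_zero, h]⟩
    · exact exists_sol h hl1
  obtain ⟨x, hx⟩ := hex
  exact ⟨x, hx, fun y hy => F_strictMono.injective (hy.trans hx.symm)⟩
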